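/- (Counting core of HIT's space bound.) Let U be a type, let A be a finite set of pairs (m, x) with m a positive integer and x ∈ U (an appearance of element x in block m), and let L ∈ ℕ. Then the number of triples (ℓ, i, x) such that 0 ≤ ℓ ≤ L, i is a positive integer with 2^ℓ ∣ i, and there exists m with (m, x) ∈ A and i − 2^ℓ < m ≤ i, is at most (L + 1) · |A|. (Each appearance of an element is reflected in at most one table per level, hence the total number of table entries is at most (L+1)·N for N appearances.) -/

import Mathlib

lemma hit_aux {ℓ i m : ℕ} (hi : 0 < i) (hd : 2 ^ ℓ ∣ i) (hm : 0 < m)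
    (h1 : i - 2 ^ ℓ < m) (h2 : m ≤ i) :
    i = 2 ^ ℓ * ((m - 1) / 2 ^ ℓ + 1) := by
  obtain ⟨c, rfl⟩ := hd
  have hb : 0 < 2 ^ ℓ := Nat.pow_pos (by norm_num)
  rcases c with _ | d
  · simp at hi
  · have e1 : 2 ^ ℓ * (d + 1) = 2 ^ ℓ * d + 2 ^ ℓ := by ring
    have e2 : d * 2 ^ ℓ = 2 ^ ℓ * d := by ring
    have e3 : (d + 1) * 2 ^ ℓ = 2 ^ ℓ * d + 2 ^ ℓ := by ring
    have hdiv : (m - 1) / 2 ^ ℓ = d := by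
      apply Nat.div_eq_of_lt_le <;> omega
    rw [hdiv]

/-- Counting core of HIT's space bound: given an appearance set `A` of pairs
`(m, x)` with `m` a positive block index, the set of table entries — triples
`(ℓ, i, x)` with `ℓ ≤ L`, `i` positive, `2^ℓ ∣ i`, and `x` appearing in some
block `m` with `i − 2^ℓ < m ≤ i` — is finite of size at most `(L + 1)·|A|`. -/
theorem hit_space_bound {U : Type*} (A : Finset (ℕ × U)) (hA : ∀ p ∈ A, 0 < p.1)
    (L : ℕ) :
    ({t : ℕ × ℕ × U | t.1 ≤ L ∧ 0 < t.2.1 ∧ 2 ^ t.1 ∣ t.2.1 ∧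
        ∃ m, (m, t.2.2) ∈ A ∧ t.2.1 - 2 ^ t.1 < m ∧ m ≤ t.2.1}).Finite ∧
    ({t : ℕ × ℕ × U | t.1 ≤ L ∧ 0 < t.2.1 ∧ 2 ^ t.1 ∣ t.2.1 ∧
        ∃ m, (m, t.2.2) ∈ A ∧ t.2.1 - 2 ^ t.1 < m ∧ m ≤ t.2.1}).ncard ≤
      (L + 1) * A.card := by
  classical
  set F : Finset (ℕ × ℕ × U) :=
    (Finset.range (L + 1) ×ˢ A).image
      (fun p => (p.1, 2 ^ p.1 * ((p.2.1 - 1) / 2 ^ p.1 + 1), p.2.2)) with hF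
  have hsub : {t : ℕ × ℕ × U | t.1 ≤ L ∧ 0 < t.2.1 ∧ 2 ^ t.1 ∣ t.2.1 ∧
        ∃ m, (m, t.2.2) ∈ A ∧ t.2.1 - 2 ^ t.1 < m ∧ m ≤ t.2.1} ⊆ ↑F := by
    rintro ⟨ℓ, i, x⟩ ⟨hℓ, hi, hd, m, hmA, h1, h2⟩
    simp only [hF, Finset.coe_image, Set.mem_image, Finset.mem_coe,
      Finset.mem_product, Finset.mem_range]
    exact ⟨(ℓ, m, x), ⟨by omega, hmA⟩,
      by simp [← hit_aux hi hd (hA _ hmA) h1 h2]⟩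
  have hfin : ({t : ℕ × ℕ × U | t.1 ≤ L ∧ 0 < t.2.1 ∧ 2 ^ t.1 ∣ t.2.1 ∧
        ∃ m, (m, t.2.2) ∈ A ∧ t.2.1 - 2 ^ t.1 < m ∧ m ≤ t.2.1}).Finite :=
    F.finite_toSet.subset hsub
  refine ⟨hfin, ?_⟩
  calc _ ≤ (↑F : Set (ℕ × ℕ × U)).ncard := Set.ncard_le_ncard hsub F.finite_toSet
    _ = F.card := Set.ncard_coe_finset F
    _ ≤ (Finset.range (L + 1) ×ˢ A).card := by rw [hF]; exact Finset.card_image_le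
    _ = (L + 1) * A.card := by simp [Finset.card_product]
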